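/- Let G be a finite 3-connected simple graph and let S be a 3-cut of G. Suppose G − S consists of exactly three components C₁, C₂, C₃. Let F₁ be a c₁–S fan in G[V(C₁) ∪ S] where c₁ ∈ C₁. If (V(C₁) ∪ S) − V(F₁) ≠ ∅, then G contains at least two contractible non-edges. -/

import Mathlib

open SimpleGraph

variable {V : Type*}

/-- A graph is `k`-connected: it has at least `k+1` vertices, and removing any set of
fewer than `k` vertices leaves a connected graph. -/
def KConnected (k : ℕ) (G : SimpleGraph V) : Prop :=
  k + 1 ≤ Nat.card V ∧ ∀ S : Set V, S.ncard < k → (G.induce Sᶜ).Connected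

/-- Contraction of the non-edge `{u, v}`: `u` and `v` are replaced by a single
vertex (represented here by `u`), adjacent to every vertex that was adjacent to
`u` or to `v`. -/
def contractNonEdge (G : SimpleGraph V) (u v : V) : SimpleGraph {w : V // w ≠ v} where
  Adj a b := a ≠ b ∧ (G.Adj a.1 b.1 ∨ (a.1 = u ∧ G.Adj v b.1) ∨ (b.1 = u ∧ G.Adj a.1 v))
  symm := by
    constructor
    rintro a b ⟨hab, h | ⟨h1, h2⟩ | ⟨h1, h2⟩⟩
    · exact ⟨hab.symm, Or.inl h.symm⟩
    · exact ⟨hab.symm, Or.inr (Or.inr ⟨h1, h2.symm⟩)⟩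
    · exact ⟨hab.symm, Or.inr (Or.inl ⟨h1, h2.symm⟩)⟩
  loopless := ⟨fun a h => h.1 rfl⟩

/-- `{u, v}` is a contractible non-edge of `G`: a non-edge whose contraction yields
a `3`-connected graph. -/
def IsContractibleNonEdge (G : SimpleGraph V) (u v : V) : Prop :=
  u ≠ v ∧ ¬ G.Adj u v ∧ KConnected 3 (contractNonEdge G u v)

/-- The set of contractible non-edges of `G`, as unordered pairs of vertices. -/
def contractibleNonEdges (G : SimpleGraph V) : Set (Sym2 V) :=
  {p | ∃ u v : V, p = s(u, v) ∧ IsContractibleNonEdge G u v}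

/-- `S` is a cut of `G`: deleting the vertices of `S` leaves a disconnected graph. -/
def IsCutSet (G : SimpleGraph V) (S : Set V) : Prop :=
  ¬ (G.induce Sᶜ).Preconnected

/-- `C` is the vertex set of a (connected) component of `G − S`. -/
def IsCompOf (G : SimpleGraph V) (S : Set V) (C : Set V) : Prop :=
  C.Nonempty ∧ C ⊆ Sᶜ ∧ (G.induce C).Connected ∧
    ∀ x ∈ C, ∀ y, y ∉ S → G.Adj x y → y ∈ C

/-- A `c`–`S` fan for a three-element set `S = {s1, s2, s3}` inside the induced
subgraph `G[A]`: three paths of `G` from `c ∉ S` to the three (distinct) vertices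
of `S`, pairwise sharing only the vertex `c`, each meeting `S` only in its final
endpoint, and with all their vertices inside `A`. -/
structure Fan3 (G : SimpleGraph V) (A : Set V) (c : V) (S : Set V) where
  s1 : V
  s2 : V
  s3 : V
  hS : S = {s1, s2, s3}
  h12 : s1 ≠ s2
  h13 : s1 ≠ s3
  h23 : s2 ≠ s3
  hc : c ∉ S
  p1 : G.Walk c s1
  p2 : G.Walk c s2
  p3 : G.Walk c s3
  hp1 : p1.IsPath
  hp2 : p2.IsPath
  hp3 : p3.IsPath
  hA1 : ∀ x ∈ p1.support, x ∈ A
  hA2 : ∀ x ∈ p2.support, x ∈ A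
  hA3 : ∀ x ∈ p3.support, x ∈ A
  hS1 : ∀ x ∈ p1.support, x ∈ S → x = s1
  hS2 : ∀ x ∈ p2.support, x ∈ S → x = s2
  hS3 : ∀ x ∈ p3.support, x ∈ S → x = s3
  hI12 : ∀ x ∈ p1.support, x ∈ p2.support → x = c
  hI13 : ∀ x ∈ p1.support, x ∈ p3.support → x = c
  hI23 : ∀ x ∈ p2.support, x ∈ p3.support → x = c

/-- The vertex set of a fan. -/
def Fan3.verts {G : SimpleGraph V} {A : Set V} {c : V} {S : Set V}
    (F : Fan3 G A c S) : Set V :=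
  {x | x ∈ F.p1.support ∨ x ∈ F.p2.support ∨ x ∈ F.p3.support}

/-- The order of a fan is its number of vertices. -/
noncomputable def Fan3.order {G : SimpleGraph V} {A : Set V} {c : V} {S : Set V}
    (F : Fan3 G A c S) : ℕ :=
  F.verts.ncard


section AuxProofs

lemma exists_walk_of_induce_reachable {G : SimpleGraph V} {A : Set V} {a b : ↥A}
    (h : (G.induce A).Reachable a b) :
    ∃ p : G.Walk a.1 b.1, ∀ v ∈ p.support, v ∈ A := by
  obtain ⟨p⟩ := h
  induction p with
  | nil => exact ⟨Walk.nil, by simp [Subtype.coe_prop]⟩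
  | cons h p ih =>
      obtain ⟨q, hq⟩ := ih
      refine ⟨Walk.cons (by simpa using h) q, ?_⟩
      intro v hv
      rcases List.mem_cons.mp (by simpa [Walk.support_cons] using hv) with rfl | hv
      · exact Subtype.coe_prop _
      · exact hq v hv

lemma reachable_induce_of_walk_map {W' : Type*} {G : SimpleGraph V} {H : SimpleGraph W'}
    (f : V → W') (A : Set V) (B : Set W')
    (hf : ∀ a ∈ A, f a ∈ B)
    (hadj : ∀ a ∈ A, ∀ b ∈ A, G.Adj a b → H.Adj (f a) (f b) ∨ f a = f b) :
    ∀ {a b : V} (p : G.Walk a b), (∀ v ∈ p.support, v ∈ A) →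
    ∀ (ha : f a ∈ B) (hb : f b ∈ B), (H.induce B).Reachable ⟨f a, ha⟩ ⟨f b, hb⟩ := by
  intro a b p
  induction p with
  | nil => intro _ ha hb; exact Reachable.refl _
  | @cons a c b h p ih =>
      intro hsup ha hb
      have hcA : c ∈ A := hsup c (by simp [Walk.support_cons])
      have haA : a ∈ A := hsup a (by simp)
      have hcB : f c ∈ B := hf c hcA
      have hrest : (H.induce B).Reachable ⟨f c, hcB⟩ ⟨f b, hb⟩ :=
        ih (fun v hv => hsup v (by simp [Walk.support_cons, hv])) hcB hb
      rcases hadj a haA c hcA h with h' | h'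
      · exact Reachable.trans (Adj.reachable (by simpa using h')) hrest
      · have : (⟨f a, ha⟩ : ↥B) = ⟨f c, hcB⟩ := Subtype.ext h'
        rw [this]; exact hrest

lemma reachable_induce_of_walk {G : SimpleGraph V} {A : Set V} {a b : V}
    (p : G.Walk a b) (hp : ∀ v ∈ p.support, v ∈ A) (ha : a ∈ A) (hb : b ∈ A) :
    (G.induce A).Reachable ⟨a, ha⟩ ⟨b, hb⟩ :=
  reachable_induce_of_walk_map id A A (fun _ h => h) (fun _ _ _ _ h => Or.inl h) p hp ha hb

lemma mem_of_closed {G : SimpleGraph V} {S C : Set V}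
    (hclosed : ∀ x ∈ C, ∀ y, y ∉ S → G.Adj x y → y ∈ C) :
    ∀ {a b : V} (p : G.Walk a b), (∀ v ∈ p.support, v ∉ S) → a ∈ C → b ∈ C := by
  intro a b p
  induction p with
  | nil => intro _ ha; exact ha
  | @cons a c b h p ih =>
      intro hsup ha
      exact ih (fun v hv => hsup v (by simp [Walk.support_cons, hv]))
        (hclosed a ha c (hsup c (by simp [Walk.support_cons])) h)

lemma walk_enter {G : SimpleGraph V} {S C : Set V}
    (hCS : C ⊆ Sᶜ)
    (hclosed : ∀ x ∈ C, ∀ y, y ∉ S → G.Adj x y → y ∈ C) :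
    ∀ {y s : V} (p : G.Walk y s), y ∈ C → s ∈ S →
    ∃ a b, a ∈ C ∧ b ∈ S ∧ G.Adj a b ∧ b ∈ p.support ∧
      ∃ q : G.Walk y a, ∀ v ∈ q.support, v ∈ C ∧ v ∈ p.support := by
  intro y s p
  induction p with
  | nil => intro hy hs; exact absurd hs (hCS hy)
  | @cons y z s h p ih =>
      intro hy hs
      by_cases hz : z ∈ S
      · exact ⟨y, z, hy, hz, h, by simp [Walk.support_cons], Walk.nil,
          by simp [hy]⟩
      · obtain ⟨a, b, haC, hbS, hab, hbsup, q, hq⟩ := ih (hclosed y hy z hz h) hs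
        refine ⟨a, b, haC, hbS, hab, by simp [Walk.support_cons, hbsup], Walk.cons h q, ?_⟩
        intro v hv
        rcases List.mem_cons.mp (by simpa [Walk.support_cons] using hv) with rfl | hv
        · exact ⟨hy, by simp⟩
        · exact ⟨(hq v hv).1, by simp [Walk.support_cons, (hq v hv).2]⟩

lemma comp_subset {G : SimpleGraph V} {S C D : Set V}
    (hC : IsCompOf G S C) (hD : IsCompOf G S D) {x : V} (hxC : x ∈ C) (hxD : x ∈ D) :
    C ⊆ D := by
  intro z hz
  have hreach : (G.induce C).Reachable ⟨x, hxC⟩ ⟨z, hz⟩ :=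
    hC.2.2.1.preconnected _ _
  obtain ⟨p, hp⟩ := exists_walk_of_induce_reachable hreach
  exact mem_of_closed hD.2.2.2 p (fun v hv => hC.2.1 (hp v hv)) hxD

lemma comp_disjoint {G : SimpleGraph V} {S C D : Set V}
    (hC : IsCompOf G S C) (hD : IsCompOf G S D) (hne : C ≠ D) {x : V}
    (hxC : x ∈ C) : x ∉ D := by
  intro hxD
  exact hne (Set.Subset.antisymm (comp_subset hC hD hxC hxD) (comp_subset hD hC hxD hxC))

lemma exists_adj_comp {G : SimpleGraph V} (hG : KConnected 3 G) {S C : Set V}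
    (hC : IsCompOf G S C) (hS3 : ∀ s ∈ S, (S \ {s}).ncard < 3) {s : V} (hs : s ∈ S) :
    ∃ y ∈ C, G.Adj s y := by
  obtain ⟨y0, hy0⟩ := hC.1
  have hconn := hG.2 (S \ {s}) (hS3 s hs)
  have hy0m : y0 ∈ (S \ {s})ᶜ := fun h => (hC.2.1 hy0) h.1
  have hsm : s ∈ (S \ {s})ᶜ := fun h => h.2 rfl
  obtain ⟨p, hp⟩ := exists_walk_of_induce_reachable
    (hconn.preconnected (⟨y0, hy0m⟩ : ↥(S \ {s})ᶜ) ⟨s, hsm⟩)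
  obtain ⟨a, b, haC, hbS, hab, hbsup, -⟩ := walk_enter hC.2.1 hC.2.2.2 p hy0 hs
  have : b = s := by
    have := hp b hbsup
    by_contra hne
    exact this ⟨hbS, hne⟩
  exact ⟨a, haC, this ▸ hab.symm⟩

lemma reach_S {G : SimpleGraph V} (hG : KConnected 3 G) {S C T : Set V}
    (hC : IsCompOf G S C) (hT2 : (T ∩ (C ∪ S)).ncard < 3)
    {s0 : V} (hs0S : s0 ∈ S) (hs0T : s0 ∉ T)
    {y : V} (hy : y ∈ C) (hyT : y ∉ T) :
    ∃ b, ∃ hb : b ∈ Tᶜ, b ∈ S ∧ (G.induce Tᶜ).Reachable ⟨y, hyT⟩ ⟨b, hb⟩ := by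
  set T2 := T ∩ (C ∪ S) with hT2def
  have hconn := hG.2 T2 hT2
  have hyT2 : y ∈ T2ᶜ := fun h => hyT h.1
  have hs0T2 : s0 ∈ T2ᶜ := fun h => hs0T h.1
  obtain ⟨p, hp⟩ := exists_walk_of_induce_reachable
    (hconn.preconnected (⟨y, hyT2⟩ : ↥T2ᶜ) ⟨s0, hs0T2⟩)
  obtain ⟨a, b, haC, hbS, hab, hbsup, q, hq⟩ := walk_enter hC.2.1 hC.2.2.2 p hy hs0S
  have hbT : b ∉ T := fun h => (hp b hbsup) ⟨h, Or.inr hbS⟩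
  have haT : a ∉ T := fun h => (hp a ((hq a q.end_mem_support).2)) ⟨h, Or.inl haC⟩
  have hreach : (G.induce Tᶜ).Reachable ⟨y, hyT⟩ ⟨a, haT⟩ :=
    reachable_induce_of_walk q
      (fun v hv => fun h => (hp v (hq v hv).2) ⟨h, Or.inl (hq v hv).1⟩) hyT haT
  refine ⟨b, hbT, hbS, hreach.trans (Adj.reachable ?_)⟩
  simpa using hab

lemma lemC [Fintype V] {G : SimpleGraph V} (hG : KConnected 3 G)
    {S C1 Ca Cb : Set V}
    (h1 : IsCompOf G S C1) (ha : IsCompOf G S Ca) (hb : IsCompOf G S Cb)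
    (h1a : C1 ≠ Ca) (h1b : C1 ≠ Cb) (hab : Ca ≠ Cb)
    (hcover : ∀ y, y ∉ S → y ∈ C1 ∨ y ∈ Ca ∨ y ∈ Cb)
    {c1 : V} (F1 : Fan3 G (C1 ∪ S) c1 S)
    {x : V} (hx1 : x ∈ C1) (hxF : x ∉ F1.verts)
    {c2 : V} (hc2 : c2 ∈ Ca) (w : V) :
    (G.induce ({x, c2, w} : Set V)ᶜ).Connected := by
  classical
  set T : Set V := {x, c2, w} with hTdef
  have hmemT : ∀ v, v ∈ T ↔ v = x ∨ v = c2 ∨ v = w := by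
    intro v; simp [hTdef]
  -- basic membership facts
  have hxS : x ∉ S := h1.2.1 hx1
  have hc2S : c2 ∉ S := ha.2.1 hc2
  have hc2C1 : c2 ∉ C1 := comp_disjoint ha h1 (Ne.symm h1a) hc2
  have hc2Cb : c2 ∉ Cb := comp_disjoint ha hb hab hc2
  have hxCa : x ∉ Ca := comp_disjoint h1 ha h1a hx1
  have hxCb : x ∉ Cb := comp_disjoint h1 hb h1b hx1
  have hSnT : ∀ s ∈ S, s ≠ w → s ∉ T := by
    intro s hs hsw hmem
    rcases (hmemT s).1 hmem with rfl | rfl | rfl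
    · exact hxS hs
    · exact hc2S hs
    · exact hsw rfl
  -- cardinality of S
  have hScard : S.ncard ≤ 3 := by
    rw [F1.hS]
    calc ({F1.s1, F1.s2, F1.s3} : Set V).ncard
        ≤ ({F1.s2, F1.s3} : Set V).ncard + 1 := Set.ncard_insert_le _ _
      _ ≤ (({F1.s3} : Set V).ncard + 1) + 1 := by
          have := Set.ncard_insert_le F1.s2 ({F1.s3} : Set V); omega
      _ ≤ 3 := by rw [Set.ncard_singleton]
  have hS3' : ∀ s ∈ S, (S \ {s}).ncard < 3 :=
    fun s hs => lt_of_lt_of_le (Set.ncard_diff_singleton_lt_of_mem hs (Set.toFinite _)) hScard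
  have hmemS : ∀ v, (v = F1.s1 ∨ v = F1.s2 ∨ v = F1.s3) ↔ v ∈ S := by
    intro v
    constructor
    · intro h
      have hv : v ∈ ({F1.s1, F1.s2, F1.s3} : Set V) := by simpa using h
      exact F1.hS.symm ▸ hv
    · intro h
      have hv : v ∈ ({F1.s1, F1.s2, F1.s3} : Set V) := F1.hS ▸ h
      simpa using hv
  -- an element of S outside T
  obtain ⟨s0, hs0S, hs0T⟩ : ∃ s, s ∈ S ∧ s ∉ T := by
    by_cases hw1 : F1.s1 = w
    · refine ⟨F1.s2, (hmemS _).1 (by simp), hSnT _ ((hmemS _).1 (by simp)) ?_⟩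
      exact fun h => F1.h12 (hw1.trans h.symm)
    · exact ⟨F1.s1, (hmemS _).1 (by simp), hSnT _ ((hmemS _).1 (by simp)) hw1⟩
  -- hR2 : vertices of S \ T are mutually reachable in G - T
  have hR2 : ∀ (b b' : ↥Tᶜ), b.1 ∈ S → b'.1 ∈ S → (G.induce Tᶜ).Reachable b b' := by
    by_cases hw : w ∈ Cb
    · -- the fan avoids T entirely
      have hfanT : ∀ v ∈ F1.verts, v ∈ Tᶜ := by
        intro v hv hvT
        have hvC1S : v ∈ C1 ∪ S := by
          rcases hv with h | h | h
          · exact F1.hA1 v h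
          · exact F1.hA2 v h
          · exact F1.hA3 v h
        rcases (hmemT v).1 hvT with rfl | rfl | rfl
        · exact hxF hv
        · rcases hvC1S with h | h
          · exact hc2C1 h
          · exact hc2S h
        · rcases hvC1S with h | h
          · exact comp_disjoint hb h1 (Ne.symm h1b) hw h
          · exact hb.2.1 hw h
      have hc1T : c1 ∈ Tᶜ := hfanT c1 (Or.inl F1.p1.start_mem_support)
      have hreach_c1 : ∀ (s : ↥Tᶜ), s.1 ∈ S →
          (G.induce Tᶜ).Reachable s ⟨c1, hc1T⟩ := by
        intro s hsS
        have : s.1 = F1.s1 ∨ s.1 = F1.s2 ∨ s.1 = F1.s3 := (hmemS _).2 hsS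
        rcases this with h | h | h
        · have := (reachable_induce_of_walk F1.p1
            (fun v hv => hfanT v (Or.inl hv)) hc1T (h ▸ s.2)).symm
          convert this using 2 <;> exact h
        · have := (reachable_induce_of_walk F1.p2
            (fun v hv => hfanT v (Or.inr (Or.inl hv))) hc1T (h ▸ s.2)).symm
          convert this using 2 <;> exact h
        · have := (reachable_induce_of_walk F1.p3
            (fun v hv => hfanT v (Or.inr (Or.inr hv))) hc1T (h ▸ s.2)).symm
          convert this using 2 <;> exact h
      intro b b' hbS hb'S
      exact (hreach_c1 b hbS).trans (hreach_c1 b' hb'S).symm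
    · -- Cb avoids T; connect through Cb
      have hCbT : ∀ v ∈ Cb, v ∈ Tᶜ := by
        intro v hv hvT
        rcases (hmemT v).1 hvT with rfl | rfl | rfl
        · exact hxCb hv
        · exact hc2Cb hv
        · exact hw hv
      intro b b' hbS hb'S
      obtain ⟨yb, hybCb, hadjb⟩ := exists_adj_comp hG hb hS3' hbS
      obtain ⟨yb', hyb'Cb, hadjb'⟩ := exists_adj_comp hG hb hS3' hb'S
      obtain ⟨p, hp⟩ := exists_walk_of_induce_reachable
        (hb.2.2.1.preconnected (⟨yb, hybCb⟩ : ↥Cb) ⟨yb', hyb'Cb⟩)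
      have hmid : (G.induce Tᶜ).Reachable ⟨yb, hCbT yb hybCb⟩ ⟨yb', hCbT yb' hyb'Cb⟩ :=
        reachable_induce_of_walk p (fun v hv => hCbT v (hp v hv)) _ _
      have e1 : (G.induce Tᶜ).Adj b ⟨yb, hCbT yb hybCb⟩ := by simpa using hadjb
      have e2 : (G.induce Tᶜ).Adj b' ⟨yb', hCbT yb' hyb'Cb⟩ := by simpa using hadjb'
      exact (e1.reachable).trans (hmid.trans (e2.reachable).symm)
  -- hR1 : every vertex reaches some vertex of S in G - T
  have hR1 : ∀ u : ↥Tᶜ, ∃ b : ↥Tᶜ, b.1 ∈ S ∧ (G.induce Tᶜ).Reachable u b := by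
    intro u
    by_cases huS : u.1 ∈ S
    · exact ⟨u, huS, Reachable.refl u⟩
    · have hpair : ∀ (y z : V), ({y, z} : Set V).ncard < 3 := by
        intro y z
        have h1 := Set.ncard_insert_le y ({z} : Set V)
        have h2 := Set.ncard_singleton z
        omega
      rcases hcover u.1 huS with hu | hu | hu
      · have hbound : (T ∩ (C1 ∪ S)).ncard < 3 := by
          refine lt_of_le_of_lt (Set.ncard_le_ncard ?_ (Set.toFinite _)) (hpair x w)
          rintro v ⟨hvT, hvC⟩
          rcases (hmemT v).1 hvT with rfl | rfl | rfl
          · exact Or.inl rfl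
          · rcases hvC with h | h
            · exact absurd h hc2C1
            · exact absurd h hc2S
          · exact Or.inr rfl
        obtain ⟨b, hbm, hbS, hreach⟩ := reach_S hG h1 hbound hs0S hs0T hu u.2
        exact ⟨⟨b, hbm⟩, hbS, hreach⟩
      · have hbound : (T ∩ (Ca ∪ S)).ncard < 3 := by
          refine lt_of_le_of_lt (Set.ncard_le_ncard ?_ (Set.toFinite _)) (hpair c2 w)
          rintro v ⟨hvT, hvC⟩
          rcases (hmemT v).1 hvT with rfl | rfl | rfl
          · rcases hvC with h | h
            · exact absurd h hxCa
            · exact absurd h hxS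
          · exact Or.inl rfl
          · exact Or.inr rfl
        obtain ⟨b, hbm, hbS, hreach⟩ := reach_S hG ha hbound hs0S hs0T hu u.2
        exact ⟨⟨b, hbm⟩, hbS, hreach⟩
      · have hbound : (T ∩ (Cb ∪ S)).ncard < 3 := by
          refine lt_of_le_of_lt (Set.ncard_le_ncard ?_ (Set.toFinite _)) (hpair c2 w)
          rintro v ⟨hvT, hvC⟩
          rcases (hmemT v).1 hvT with rfl | rfl | rfl
          · rcases hvC with h | h
            · exact absurd h hxCb
            · exact absurd h hxS
          · exact Or.inl rfl
          · exact Or.inr rfl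
        obtain ⟨b, hbm, hbS, hreach⟩ := reach_S hG hb hbound hs0S hs0T hu u.2
        exact ⟨⟨b, hbm⟩, hbS, hreach⟩
  rw [connected_iff]
  refine ⟨?_, ⟨⟨s0, hs0T⟩⟩⟩
  intro u v
  obtain ⟨bu, hbuS, hru⟩ := hR1 u
  obtain ⟨bv, hbvS, hrv⟩ := hR1 v
  exact hru.trans ((hR2 bu bv hbuS hbvS).trans hrv.symm)

lemma lemB [Fintype V] {G : SimpleGraph V} (hG : KConnected 3 G) {u v : V}
    (huv : u ≠ v) (hnadj : ¬ G.Adj u v) (h5 : 5 ≤ Fintype.card V)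
    (h : ∀ w, (G.induce ({u, v, w} : Set V)ᶜ).Connected) :
    KConnected 3 (contractNonEdge G u v) := by
  classical
  have hcard : Nat.card {w : V // w ≠ v} = Fintype.card V - 1 := by
    rw [Nat.card_eq_fintype_card]
    simpa using Fintype.card_subtype_compl (fun w => w = v)
  constructor
  · omega
  intro T' hT'
  set z : {w : V // w ≠ v} := ⟨u, huv⟩ with hzdef
  -- the function collapsing v onto z
  set f : V → {w : V // w ≠ v} := fun y => if h : y = v then z else ⟨y, h⟩ with hfdef
  have hfval : ∀ (y : V) (hy : y ≠ v), f y = ⟨y, hy⟩ := by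
    intro y hy; simp [hfdef, hy]
  have hfv : f v = z := by simp [hfdef]
  -- nonemptiness of the complement
  have hne : T'ᶜ.Nonempty := by
    have h1 : T'.ncard + T'ᶜ.ncard = Nat.card {w : V // w ≠ v} :=
      Set.ncard_add_ncard_compl T'
    have : T'ᶜ.ncard ≠ 0 := by omega
    exact Set.nonempty_of_ncard_ne_zero this
  rw [connected_iff]
  refine ⟨?_, ⟨⟨hne.choose, hne.choose_spec⟩⟩⟩
  by_cases hz : z ∈ T'
  · -- the contracted vertex is removed
    have hdiff : (T' \ {z}).ncard ≤ 1 := by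
      have := Set.ncard_diff_singleton_add_one hz (Set.toFinite T')
      omega
    obtain ⟨t0, ht0a, ht0c⟩ : ∃ t0 : V, (∀ a ∈ T', a = z ∨ a.1 = t0) ∧
        (∀ c : {w : V // w ≠ v}, c.1 = t0 → c ∈ T') := by
      rcases Set.eq_empty_or_nonempty (T' \ {z}) with hemp | ⟨a0, ha0⟩
      · refine ⟨u, fun a hA => ?_, fun c hc => ?_⟩
        · by_contra hcon
          push_neg at hcon
          exact (hemp ▸ Set.notMem_empty a) ⟨hA, hcon.1⟩
        · have : c = z := Subtype.ext hc
          exact this ▸ hz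
      · have hone : ∀ a ∈ T' \ {z}, ∀ b ∈ T' \ {z}, a = b :=
          (Set.ncard_le_one (Set.toFinite _)).mp hdiff
        refine ⟨a0.1, fun a hA => ?_, fun c hc => ?_⟩
        · by_cases haz : a = z
          · exact Or.inl haz
          · exact Or.inr (congrArg Subtype.val (hone a ⟨hA, haz⟩ a0 ha0))
        · have : c = a0 := Subtype.ext hc
          exact this ▸ ha0.1
    set W : Set V := {u, v, t0} with hWdef
    have hWc : ∀ y ∈ Wᶜ, f y ∈ T'ᶜ := by
      intro y hy
      have hy' : ¬(y = u ∨ y = v ∨ y = t0) := by simpa [hWdef] using hy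
      push_neg at hy'
      rw [hfval y hy'.2.1]
      intro hmem
      rcases ht0a _ hmem with hq | hq
      · exact hy'.1 (congrArg Subtype.val hq)
      · exact hy'.2.2 hq
    have hnotW : ∀ a : ↥T'ᶜ, a.1.1 ∉ W := by
      intro a hmem
      rcases hmem with hq | hq | hq
      · exact a.2 (show a.1 ∈ T' from (Subtype.ext hq : a.1 = z) ▸ hz)
      · exact a.1.2 hq
      · exact a.2 (ht0c a.1 hq)
    intro a b
    obtain ⟨p, hp⟩ := exists_walk_of_induce_reachable
      ((h t0).preconnected (⟨a.1.1, hnotW a⟩ : ↥Wᶜ) ⟨b.1.1, hnotW b⟩)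
    have hadj : ∀ y ∈ Wᶜ, ∀ y' ∈ Wᶜ, G.Adj y y' →
        (contractNonEdge G u v).Adj (f y) (f y') ∨ f y = f y' := by
      intro y hy y' hy' hyy'
      have hyv : y ≠ v := fun hq => hy (by simp [hWdef, hq])
      have hy'v : y' ≠ v := fun hq => hy' (by simp [hWdef, hq])
      rw [hfval y hyv, hfval y' hy'v]
      exact Or.inl ⟨fun hq => hyy'.ne (congrArg Subtype.val hq), Or.inl hyy'⟩
    have hres := reachable_induce_of_walk_map f Wᶜ T'ᶜ hWc hadj p hp
      (hWc _ (hnotW a)) (hWc _ (hnotW b))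
    have hea : (⟨f a.1.1, hWc _ (hnotW a)⟩ : ↥T'ᶜ) = a := by
      apply Subtype.ext
      show f a.1.1 = a.1
      rw [hfval _ a.1.2]
    have heb : (⟨f b.1.1, hWc _ (hnotW b)⟩ : ↥T'ᶜ) = b := by
      apply Subtype.ext
      show f b.1.1 = b.1
      rw [hfval _ b.1.2]
    rwa [hea, heb] at hres
  · -- the contracted vertex survives
    set W : Set V := Subtype.val '' T' with hWdef
    have hWcard : W.ncard < 3 := by
      rw [hWdef, Set.ncard_image_of_injective T' Subtype.val_injective]
      exact hT'
    have hconn := hG.2 W hWcard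
    have hWc : ∀ y ∈ Wᶜ, f y ∈ T'ᶜ := by
      intro y hy
      by_cases hyv : y = v
      · rw [hyv, hfv]; exact hz
      · rw [hfval y hyv]
        intro hmem
        exact hy ⟨_, hmem, rfl⟩
    have hnotW : ∀ a : ↥T'ᶜ, a.1.1 ∉ W := by
      rintro a ⟨c, hc, hcval⟩
      exact a.2 ((Subtype.val_injective hcval : c = a.1) ▸ hc)
    intro a b
    obtain ⟨p, hp⟩ := exists_walk_of_induce_reachable
      (hconn.preconnected (⟨a.1.1, hnotW a⟩ : ↥Wᶜ) ⟨b.1.1, hnotW b⟩)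
    have hadj : ∀ y ∈ Wᶜ, ∀ y' ∈ Wᶜ, G.Adj y y' →
        (contractNonEdge G u v).Adj (f y) (f y') ∨ f y = f y' := by
      intro y _ y' _ hyy'
      left
      by_cases hyv : y = v
      · have hadjv : G.Adj v y' := hyv ▸ hyy'
        have hy'v : y' ≠ v := fun hq => (hq ▸ hadjv).ne rfl
        have hy'u : y' ≠ u := fun hq => hnadj (hq ▸ hadjv).symm
        rw [hyv, hfv, hfval y' hy'v]
        exact ⟨fun hq => hy'u (congrArg Subtype.val hq).symm, Or.inr (Or.inl ⟨rfl, hadjv⟩)⟩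
      · by_cases hy'v : y' = v
        · have hadjv : G.Adj y v := hy'v ▸ hyy'
          have hyu : y ≠ u := fun hq => hnadj (hq ▸ hadjv)
          rw [hy'v, hfv, hfval y hyv]
          exact ⟨fun hq => hyu (congrArg Subtype.val hq), Or.inr (Or.inr ⟨rfl, hadjv⟩)⟩
        · rw [hfval y hyv, hfval y' hy'v]
          exact ⟨fun hq => hyy'.ne (congrArg Subtype.val hq), Or.inl hyy'⟩
    have hres := reachable_induce_of_walk_map f Wᶜ T'ᶜ hWc hadj p hp
      (hWc _ (hnotW a)) (hWc _ (hnotW b))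
    have hea : (⟨f a.1.1, hWc _ (hnotW a)⟩ : ↥T'ᶜ) = a := by
      apply Subtype.ext
      show f a.1.1 = a.1
      rw [hfval _ a.1.2]
    have heb : (⟨f b.1.1, hWc _ (hnotW b)⟩ : ↥T'ᶜ) = b := by
      apply Subtype.ext
      show f b.1.1 = b.1
      rw [hfval _ b.1.2]
    rwa [hea, heb] at hres

end AuxProofs

/-- Let `G` be a finite 3-connected graph and `S` a 3-cut of `G` such that `G − S`
consists of exactly three components `C₁, C₂, C₃`. Let `F₁` be a `c₁`–`S` fan in
`G[V(C₁) ∪ S]` with `c₁ ∈ C₁`. If `(V(C₁) ∪ S) − V(F₁) ≠ ∅`, then `G` contains at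
least two contractible non-edges. -/
theorem stmt3 {V : Type*} [Fintype V] (G : SimpleGraph V) (hG : KConnected 3 G)
    (S : Set V) (hS3 : S.ncard = 3) (hScut : IsCutSet G S)
    (C1 C2 C3 : Set V)
    (h1 : IsCompOf G S C1) (h2 : IsCompOf G S C2) (h3 : IsCompOf G S C3)
    (h12 : C1 ≠ C2) (h13 : C1 ≠ C3) (h23 : C2 ≠ C3)
    (hcover : C1 ∪ C2 ∪ C3 = Sᶜ)
    (c1 : V) (hc1 : c1 ∈ C1) (F1 : Fan3 G (C1 ∪ S) c1 S)
    (hrem : ((C1 ∪ S) \ F1.verts).Nonempty) :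
    2 ≤ (contractibleNonEdges G).ncard := by
  classical
  obtain ⟨x, hxmem⟩ := hrem
  have hxF : x ∉ F1.verts := hxmem.2
  have hmemS : ∀ v, (v = F1.s1 ∨ v = F1.s2 ∨ v = F1.s3) ↔ v ∈ S := by
    intro v
    constructor
    · intro h
      have hv : v ∈ ({F1.s1, F1.s2, F1.s3} : Set V) := by simpa using h
      exact F1.hS.symm ▸ hv
    · intro h
      have hv : v ∈ ({F1.s1, F1.s2, F1.s3} : Set V) := F1.hS ▸ h
      simpa using hv
  have hx1 : x ∈ C1 := by
    rcases hxmem.1 with h | h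
    · exact h
    · exfalso
      rcases (hmemS x).2 h with rfl | rfl | rfl
      · exact hxF (Or.inl F1.p1.end_mem_support)
      · exact hxF (Or.inr (Or.inl F1.p2.end_mem_support))
      · exact hxF (Or.inr (Or.inr F1.p3.end_mem_support))
  obtain ⟨c2, hc2⟩ := h2.1
  obtain ⟨c3, hc3⟩ := h3.1
  have hcover' : ∀ y, y ∉ S → y ∈ C1 ∨ y ∈ C2 ∨ y ∈ C3 := by
    intro y hy
    have : y ∈ C1 ∪ C2 ∪ C3 := hcover.symm ▸ (hy : y ∈ Sᶜ)
    rcases this with (h | h) | h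
    · exact Or.inl h
    · exact Or.inr (Or.inl h)
    · exact Or.inr (Or.inr h)
  have hcover'' : ∀ y, y ∉ S → y ∈ C1 ∨ y ∈ C3 ∨ y ∈ C2 := by
    intro y hy; rcases hcover' y hy with h | h | h
    · exact Or.inl h
    · exact Or.inr (Or.inr h)
    · exact Or.inr (Or.inl h)
  -- basic distinctness facts
  have hxS : x ∉ S := h1.2.1 hx1
  have hc1F : c1 ∈ F1.verts := Or.inl F1.p1.start_mem_support
  have hxc1 : x ≠ c1 := fun h => hxF (h ▸ hc1F)
  have hc1S : c1 ∉ S := F1.hc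
  have hs1S : F1.s1 ∈ S := (hmemS _).1 (Or.inl rfl)
  have hs2S : F1.s2 ∈ S := (hmemS _).1 (Or.inr (Or.inl rfl))
  have hs3S : F1.s3 ∈ S := (hmemS _).1 (Or.inr (Or.inr rfl))
  have hxC2 : x ∉ C2 := comp_disjoint h1 h2 h12 hx1
  have hxC3 : x ∉ C3 := comp_disjoint h1 h3 h13 hx1
  have hc2C3 : c2 ∉ C3 := comp_disjoint h2 h3 h23 hc2
  have hxc2 : x ≠ c2 := fun h => hxC2 (h ▸ hc2)
  have hxc3 : x ≠ c3 := fun h => hxC3 (h ▸ hc3)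
  have hc2c3 : c2 ≠ c3 := fun h => hc2C3 (h ▸ hc3)
  have hnadj2 : ¬ G.Adj x c2 := fun hadj =>
    (comp_disjoint h2 h1 (Ne.symm h12) hc2) (h1.2.2.2 x hx1 c2 (h2.2.1 hc2) hadj)
  have hnadj3 : ¬ G.Adj x c3 := fun hadj =>
    (comp_disjoint h3 h1 (Ne.symm h13) hc3) (h1.2.2.2 x hx1 c3 (h3.2.1 hc3) hadj)
  -- at least 5 vertices
  have h5 : 5 ≤ Fintype.card V := by
    have hcard5 : ({x, c1, F1.s1, F1.s2, F1.s3} : Finset V).card = 5 := by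
      have hxs1 : x ≠ F1.s1 := fun h => hxS (h ▸ hs1S)
      have hxs2 : x ≠ F1.s2 := fun h => hxS (h ▸ hs2S)
      have hxs3 : x ≠ F1.s3 := fun h => hxS (h ▸ hs3S)
      have hc1s1 : c1 ≠ F1.s1 := fun h => hc1S (h ▸ hs1S)
      have hc1s2 : c1 ≠ F1.s2 := fun h => hc1S (h ▸ hs2S)
      have hc1s3 : c1 ≠ F1.s3 := fun h => hc1S (h ▸ hs3S)
      rw [Finset.card_insert_of_notMem (by simp [hxc1, hxs1, hxs2, hxs3]),
        Finset.card_insert_of_notMem (by simp [hc1s1, hc1s2, hc1s3]),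
        Finset.card_insert_of_notMem (by simp [F1.h12, F1.h13]),
        Finset.card_insert_of_notMem (by simp [F1.h23]),
        Finset.card_singleton]
    calc 5 = ({x, c1, F1.s1, F1.s2, F1.s3} : Finset V).card := hcard5.symm
      _ ≤ Fintype.card V := Finset.card_le_univ _
  -- the two contractible non-edges
  have hK2 : KConnected 3 (contractNonEdge G x c2) :=
    lemB hG hxc2 hnadj2 h5
      (fun w => lemC hG h1 h2 h3 h12 h13 h23 hcover' F1 hx1 hxF hc2 w)
  have hK3 : KConnected 3 (contractNonEdge G x c3) :=
    lemB hG hxc3 hnadj3 h5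
      (fun w => lemC hG h1 h3 h2 h13 h12 (Ne.symm h23) hcover'' F1 hx1 hxF hc3 w)
  have hm2 : s(x, c2) ∈ contractibleNonEdges G := ⟨x, c2, rfl, hxc2, hnadj2, hK2⟩
  have hm3 : s(x, c3) ∈ contractibleNonEdges G := ⟨x, c3, rfl, hxc3, hnadj3, hK3⟩
  have hne23 : s(x, c2) ≠ s(x, c3) := by
    intro heq
    rw [Sym2.eq_iff] at heq
    rcases heq with ⟨-, h⟩ | ⟨h, -⟩
    · exact hc2c3 h
    · exact hxc3 h
  have : 1 < (contractibleNonEdges G).ncard := by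
    rw [Set.one_lt_ncard_iff (Set.toFinite _)]
    exact ⟨s(x, c2), s(x, c3), hm2, hm3, hne23⟩
  omega
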